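/- Let x' be the first r_x runs of x and y' the first r_y runs of y up through the o_y-th letter of the r_y-th run, with r_x, r_y, o_y ≥ 1. Let l_x be the length of the r_x-th run of x, and d the distance between the letter of the r_x-th run of x and the letter of the r_y-th run of y. Define SP(x, y, r_x, r_y, o_y) as the minimum cost correspondence between x' and y' in which the r_y-th run of y' is not extended. If l_x ≤ o_y, then SP(x, y, r_x, r_y, o_y) = min(SP(x, y, r_x, r_y, o_y − 1) + d, SP(x, y, r_x − 1, r_y, o_y − l_x) + d·l_x). -/

import Mathlib

open scoped BigOperators

variable {α : Type*}

/-- `xb` is the expansion of `x` obtained by replacing the `i`-th letter of `x`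
with `ks[i] ≥ 1` consecutive copies of itself (equivalently, by extending runs). -/
def IsExpansionWith (x : List α) (ks : List ℕ) (xb : List α) : Prop :=
  ks.length = x.length ∧ (∀ k ∈ ks, 1 ≤ k) ∧
    xb = (x.zip ks).flatMap fun p => List.replicate p.2 p.1

/-- `xb` is an expansion of `x` (obtained by extending runs). -/
def IsExpansion (x xb : List α) : Prop := ∃ ks, IsExpansionWith x ks xb

/-- The cost of a correspondence: sum of pointwise distances. -/
def corrCost (d : α → α → ℝ) (xb yb : List α) : ℝ :=
  ((xb.zip yb).map fun p => d p.1 p.2).sum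

/-- A correspondence between `x` and `y`: a pair of equal-length expansions. -/
def IsCorrespondence (x y xb yb : List α) : Prop :=
  IsExpansion x xb ∧ IsExpansion y yb ∧ xb.length = yb.length

/-- Dynamic time warping distance: minimum cost of a correspondence. -/
noncomputable def dtw (d : α → α → ℝ) (x y : List α) : ℝ :=
  sInf {c | ∃ xb yb, IsCorrespondence x y xb yb ∧ c = corrCost d xb yb}

/-- The maximal runs of equal letters of a list. -/
def runsOf [DecidableEq α] (x : List α) : List (List α) := x.splitBy (· == ·)

/-- Number of runs. -/
def numRuns [DecidableEq α] (x : List α) : ℕ := (runsOf x).length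

/-- Length of the final run. -/
def lastRunLen [DecidableEq α] (x : List α) : ℕ := ((runsOf x).getLastD []).length

/-- Length of the `i`-th run (0-indexed). -/
def runLen [DecidableEq α] (x : List α) (i : ℕ) : ℕ := ((runsOf x).getD i []).length

/-- The letter populating the `i`-th run (0-indexed). -/
def runLetter [DecidableEq α] [Inhabited α] (x : List α) (i : ℕ) : α :=
  ((runsOf x).getD i []).headI

/-- The concatenation of the first `k` runs of `x`. -/
def firstRuns [DecidableEq α] (k : ℕ) (x : List α) : List α := ((runsOf x).take k).flatten

/-- The prefix of `y` consisting of its first `ry` runs, up through the `oy`-th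
letter of the `ry`-th run (runs are 1-indexed here). -/
def runPrefix [DecidableEq α] (ry oy : ℕ) (y : List α) : List α :=
  firstRuns (ry - 1) y ++ ((runsOf y).getD (ry - 1) []).take oy

/-- The subproblem `SP(x, y, rx, ry, oy)`: the minimum cost of a correspondence
between the first `rx` runs of `x` and the prefix of `y` ending at the `oy`-th
letter of its `ry`-th run, under the constraint that the final (`ry`-th) run of
the `y`-prefix is not extended; `⊤` if no such correspondence exists. -/
noncomputable def SP [DecidableEq α] (d : α → α → ℝ) (x y : List α) (rx ry oy : ℕ) : EReal :=
  sInf ((fun p : List α × List α => ((corrCost d p.1 p.2 : ℝ) : EReal)) ''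
    {p | IsCorrespondence (firstRuns rx x) (runPrefix ry oy y) p.1 p.2 ∧
         (0 < oy → lastRunLen p.2 = oy)})

/-- Generalized edit distance over a metric with null character `nul`:
insertion/deletion of `l` costs `d nul l`, substitution of `l` by `l'` costs `d l l'`. -/
noncomputable def ged (d : α → α → ℝ) (nul : α) : List α → List α → ℝ
  | [], [] => 0
  | [], b :: ys => d nul b + ged d nul [] ys
  | a :: xs, [] => d nul a + ged d nul xs []
  | a :: xs, b :: ys =>
      min (d a b + ged d nul xs ys)
        (min (d nul a + ged d nul xs (b :: ys)) (d nul b + ged d nul (a :: xs) ys))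
  termination_by x y => x.length + y.length

/-- Simple (Hamming/Levenshtein) edit distance: unit-cost insertions, deletions
and substitutions. -/
def edH [DecidableEq α] : List α → List α → ℕ
  | [], ys => ys.length
  | xs, [] => xs.length
  | a :: xs, b :: ys =>
      min ((if a = b then 0 else 1) + edH xs ys)
        (min (1 + edH xs (b :: ys)) (1 + edH (a :: xs) ys))
  termination_by x y => x.length + y.length

/-- Simple edit distance with only unit-cost insertions and deletions. -/
def edS [DecidableEq α] : List α → List α → ℕ
  | [], ys => ys.length
  | xs, [] => xs.length
  | a :: xs, b :: ys =>
      if a = b then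
        min (edS xs ys) (min (1 + edS xs (b :: ys)) (1 + edS (a :: xs) ys))
      else
        min (1 + edS xs (b :: ys)) (1 + edS (a :: xs) ys)
  termination_by x y => x.length + y.length

/-- The padded string `p(x) = ∅ x₁ ∅ x₂ ∅ ⋯ xₙ ∅`. -/
def pad (nul : α) (x : List α) : List α := nul :: x.flatMap fun a => [a, nul]

/-- The `r`-simplification for edit distance: remove all letters of magnitude at most `r`. -/
noncomputable def sEd [MetricSpace α] (nul : α) (r : ℝ) (x : List α) : List α :=
  x.filter fun l => decide (r < dist nul l)

section MyHelpers
open List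

private theorem mySplitByLoop_eq_append {r : α → α → Bool} {l : List α} {a : α} {g : List α}
    (gs : List (List α)) : splitBy.loop r l a g gs = gs.reverse ++ splitBy.loop r l a g [] := by
  induction l generalizing a g gs with
  | nil => simp [splitBy.loop]
  | cons b l ih =>
    simp_rw [splitBy.loop]
    cases r a b
    · rw [ih ((a :: g).reverse :: gs), ih [(a :: g).reverse]]
      simp
    · exact ih gs

private theorem myRepCons (m : ℕ) (c : α) (g : List α) :
    List.replicate m c ++ c :: g = c :: (List.replicate m c ++ g) := by
  induction m with
  | zero => simp
  | succ k ih => simp [List.replicate_succ, ih]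

private theorem mySplitByLoop_replicate {r : α → α → Bool} {c : α} (hc : r c c = true)
    (n : ℕ) (l : List α) (g : List α) (gs : List (List α)) :
    splitBy.loop r (List.replicate n c ++ l) c g gs =
      splitBy.loop r l c (List.replicate n c ++ g) gs := by
  induction n generalizing g with
  | zero => simp
  | succ m ih =>
    rw [List.replicate_succ, List.cons_append]
    simp only [splitBy.loop, hc]
    rw [ih, myRepCons]
    simp [List.replicate_succ]

theorem mySplitBy_replicate_append {r : α → α → Bool} {c : α} (hc : r c c = true)
    {n : ℕ} (hn : 1 ≤ n) (l : List α) (hl : ∀ b ∈ l.head?, r c b = false) :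
    List.splitBy r (List.replicate n c ++ l) = List.replicate n c :: List.splitBy r l := by
  obtain ⟨m, rfl⟩ : ∃ m, n = m + 1 := ⟨n - 1, (Nat.succ_pred_eq_of_pos hn).symm⟩
  rw [List.replicate_succ, List.cons_append, List.splitBy]
  rw [show List.splitBy.loop r (List.replicate m c ++ l) c [] [] =
      List.splitBy.loop r l c (List.replicate m c) [] by
    simpa using mySplitByLoop_replicate hc m l [] []]
  cases l with
  | nil =>
    simp [splitBy.loop, List.splitBy, ← List.replicate_succ', List.replicate_succ]
  | cons b l' =>
    have hb : r c b = false := hl b rfl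
    rw [splitBy.loop, hb, mySplitByLoop_eq_append [((c :: List.replicate m c)).reverse]]
    simp [List.splitBy, ← List.replicate_succ', List.replicate_succ]
section Part2
variable [DecidableEq α] [Inhabited α]
set_option linter.unusedSectionVars false

theorem myChainEq_replicate (l : List α) (h : l.Chain' (· = ·)) :
    l = List.replicate l.length l.headI := by
  induction l with
  | nil => rfl
  | cons a t ih =>
    cases t with
    | nil => rfl
    | cons b t' =>
      obtain ⟨hab, h2⟩ := List.isChain_cons_cons.mp h
      have := ih h2
      subst hab
      simp only [List.headI, List.length_cons, List.replicate_succ] at this ⊢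
      rw [this]

theorem myRunsOf_mem {x r : List α} (h : r ∈ runsOf x) :
    r ≠ [] ∧ r = List.replicate r.length r.headI := by
  refine ⟨List.ne_nil_of_mem_splitBy h, myChainEq_replicate r ?_⟩
  have := List.isChain_of_mem_splitBy h
  exact this.imp fun a b hab => by simpa using hab

theorem myHeadI_replicate {n : ℕ} (hn : 1 ≤ n) (c : α) : (List.replicate n c).headI = c := by
  obtain ⟨m, rfl⟩ : ∃ m, n = m + 1 := ⟨n - 1, (Nat.succ_pred_eq_of_pos hn).symm⟩
  rfl

theorem myRun_getLast? {x r : List α} (h : r ∈ runsOf x) : r.getLast? = some r.headI := by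
  obtain ⟨hne, hc⟩ := myRunsOf_mem h
  conv_lhs => rw [hc]
  have hl : 1 ≤ r.length := List.length_pos_iff.mpr hne
  obtain ⟨m, hm⟩ : ∃ m, r.length = m + 1 := ⟨r.length - 1, (Nat.succ_pred_eq_of_pos hl).symm⟩
  rw [hm, List.getLast?_eq_getLast (by simp), List.getLast_replicate]

theorem myHead_eq_headI {u : List α} (h : u ≠ []) : u.head h = u.headI := by
  cases u with
  | nil => exact absurd rfl h
  | cons a t => rfl

theorem myRunsOf_chain' (x : List α) :
    (runsOf x).Chain' (fun u v => u.headI ≠ v.headI) := by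
  have h : (runsOf x).Chain' (fun a b =>
      ∃ (ha : a ≠ []) (hb : b ≠ []), (a.getLast ha == b.head hb) = false) :=
    List.isChain_getLast_head_splitBy _ x
  unfold List.Chain' at h ⊢
  rw [List.isChain_iff_getElem] at h ⊢
  intro i hi
  obtain ⟨ha, hb, hf⟩ := h i hi
  have hma : (runsOf x)[i] ∈ runsOf x := List.getElem_mem _
  have e1 := myRun_getLast? hma
  rw [List.getLast?_eq_getLast ha, Option.some.injEq] at e1
  rw [myHead_eq_headI hb] at hf
  rw [e1] at hf
  intro hcon
  rw [hcon] at hf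
  simp at hf

theorem myRunsOf_replicate_append {c : α} {n : ℕ} (hn : 1 ≤ n) (l : List α)
    (hl : ∀ b ∈ l.head?, b ≠ c) :
    runsOf (List.replicate n c ++ l) = List.replicate n c :: runsOf l := by
  unfold runsOf
  exact mySplitBy_replicate_append (by simp) hn l
    (fun b hb => by simpa using (hl b hb).symm)

theorem myRunsOf_flatten (L : List (List α))
    (h1 : ∀ r ∈ L, ∃ n, 1 ≤ n ∧ ∃ c, r = List.replicate n c)
    (h2 : L.Chain' (fun u v => u.headI ≠ v.headI)) :
    runsOf L.flatten = L := by
  induction L with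
  | nil => rfl
  | cons r L ih =>
    obtain ⟨n, hn, c, rfl⟩ := h1 _ List.mem_cons_self
    rw [List.flatten_cons, myRunsOf_replicate_append hn _ ?_,
      ih (fun r hr => h1 r (List.mem_cons_of_mem _ hr)) h2.tail]
    intro b hb
    cases L with
    | nil => simp at hb
    | cons r' L' =>
      obtain ⟨n', hn', c', rfl⟩ := h1 r' (by simp)
      obtain ⟨m', rfl⟩ : ∃ m, n' = m + 1 := ⟨n' - 1, (Nat.succ_pred_eq_of_pos hn').symm⟩
      rw [List.flatten_cons, List.replicate_succ, List.cons_append, List.head?_cons] at hb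
      have hbc : b = c' := by simpa using hb.symm
      subst hbc
      have hne := (List.isChain_cons_cons.mp h2).1
      rw [myHeadI_replicate hn, myHeadI_replicate hn'] at hne
      exact hne.symm

end Part2

section Part3
variable [DecidableEq α] [Inhabited α]
set_option linter.unusedSectionVars false

theorem myFlatten_runsOf (w : List α) : (runsOf w).flatten = w := List.flatten_splitBy _ w

theorem myGetLast?_replicate {n : ℕ} (hn : 1 ≤ n) (c : α) :
    (List.replicate n c).getLast? = some c := by
  obtain ⟨m, rfl⟩ : ∃ m, n = m + 1 := ⟨n - 1, (Nat.succ_pred_eq_of_pos hn).symm⟩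
  rw [List.getLast?_eq_getLast (by simp), List.getLast_replicate]

theorem myGetLast?_runsOf (w : List α) {r : List α} (hr : (runsOf w).getLast? = some r) :
    w.getLast? = some r.headI := by
  obtain ⟨L, hL⟩ := List.getLast?_eq_some_iff.mp hr
  have hmem : r ∈ runsOf w := by rw [hL]; simp
  conv_lhs => rw [← myFlatten_runsOf w, hL]
  rw [List.flatten_append, List.flatten_cons, List.flatten_nil, List.append_nil,
    List.getLast?_append, myRun_getLast? hmem]
  rfl

theorem myRunsOf_append_replicate {w : List α} {c : α} {n : ℕ} (hn : 1 ≤ n)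
    (hw : ∀ e ∈ w.getLast?, e ≠ c) :
    runsOf (w ++ List.replicate n c) = runsOf w ++ [List.replicate n c] := by
  have h := myRunsOf_flatten (runsOf w ++ [List.replicate n c]) ?_ ?_
  · rwa [List.flatten_append, List.flatten_cons, List.flatten_nil, List.append_nil,
      myFlatten_runsOf] at h
  · intro r hr
    rcases List.mem_append.mp hr with hr | hr
    · obtain ⟨hne, hc⟩ := myRunsOf_mem hr
      exact ⟨r.length, List.length_pos_iff.mpr hne, r.headI, hc⟩
    · simp only [List.mem_singleton] at hr
      exact ⟨n, hn, c, hr⟩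
  · unfold List.Chain'
    rw [List.isChain_append]
    refine ⟨myRunsOf_chain' w, List.isChain_singleton _, fun u hu v hv => ?_⟩
    simp only [List.head?_cons, Option.mem_def, Option.some.injEq] at hv
    subst hv
    rw [myHeadI_replicate hn]
    exact hw u.headI (by rw [myGetLast?_runsOf w hu]; rfl)

theorem myLastRunLen_append_replicate {w : List α} {c : α} {n : ℕ} (hn : 1 ≤ n)
    (hw : ∀ e ∈ w.getLast?, e ≠ c) :
    lastRunLen (w ++ List.replicate n c) = n := by
  unfold lastRunLen
  rw [myRunsOf_append_replicate hn hw]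
  simp

theorem myRunLen_pos {x : List α} {k : ℕ} (hk : k < numRuns x) : 1 ≤ runLen x k := by
  unfold numRuns at hk
  have hmem : (runsOf x).getD k [] ∈ runsOf x := by
    rw [List.getD_eq_getElem _ _ hk]
    exact List.getElem_mem hk
  exact List.length_pos_iff.mpr (myRunsOf_mem hmem).1

theorem myFirstRuns_succ {x : List α} {k : ℕ} (hk : k < numRuns x) :
    firstRuns (k+1) x = firstRuns k x ++ List.replicate (runLen x k) (runLetter x k) := by
  unfold numRuns at hk
  have hmem : (runsOf x)[k] ∈ runsOf x := List.getElem_mem hk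
  have hgetD : (runsOf x).getD k [] = (runsOf x)[k] := List.getD_eq_getElem _ _ hk
  unfold firstRuns runLen runLetter
  rw [List.take_succ, List.flatten_append, List.getElem?_eq_getElem hk]
  simp only [Option.toList_some, List.flatten_cons, List.flatten_nil, List.append_nil]
  rw [hgetD, ← (myRunsOf_mem hmem).2]

theorem myFirstRuns_getLast? {y : List α} {k : ℕ} (h1 : 1 ≤ k) (h2 : k ≤ numRuns y) :
    (firstRuns k y).getLast? = some (runLetter y (k-1)) := by
  obtain ⟨j, rfl⟩ : ∃ j, k = j + 1 := ⟨k - 1, (Nat.succ_pred_eq_of_pos h1).symm⟩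
  rw [myFirstRuns_succ (by omega), List.getLast?_append,
    myGetLast?_replicate (myRunLen_pos (by omega)) _]
  simp

theorem myRunLetter_ne {y : List α} {k : ℕ} (hk : k + 1 < numRuns y) :
    runLetter y k ≠ runLetter y (k+1) := by
  unfold numRuns at hk
  have h := (List.isChain_iff_getElem.mp (myRunsOf_chain' y)) k (by omega)
  unfold runLetter
  rw [List.getD_eq_getElem _ _ (by omega : k < (runsOf y).length),
    List.getD_eq_getElem _ _ (by omega : k + 1 < (runsOf y).length)]
  simpa [List.get_eq_getElem] using h

theorem myExp_nil {w : List α} : IsExpansion ([] : List α) w ↔ w = [] := by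
  constructor
  · rintro ⟨ks, hlen, _, rfl⟩
    rfl
  · rintro rfl
    exact ⟨[], rfl, by simp, rfl⟩

theorem myZip_replicate (c : α) (ks : List ℕ) :
    (List.replicate ks.length c).zip ks = ks.map (fun k => (c, k)) := by
  induction ks with
  | nil => rfl
  | cons k ks ih => simp [List.replicate_succ, ih]

theorem myFlatten_rep (c : α) (ks : List ℕ) :
    (ks.map (fun k => List.replicate k c)).flatten = List.replicate ks.sum c := by
  induction ks with
  | nil => rfl
  | cons k ks ih => rw [List.map_cons, List.flatten_cons, List.sum_cons, List.replicate_add, ih]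

theorem mySum_ge_length (ks : List ℕ) (h : ∀ k ∈ ks, 1 ≤ k) : ks.length ≤ ks.sum := by
  induction ks with
  | nil => simp
  | cons k ks ih =>
    have := h k (by simp)
    have := ih (fun k hk => h k (by simp [hk]))
    simp only [List.length_cons, List.sum_cons]
    omega

theorem myExp_replicate {c : α} {n : ℕ} (hn : 1 ≤ n) {w : List α} :
    IsExpansion (List.replicate n c) w ↔ ∃ m, n ≤ m ∧ w = List.replicate m c := by
  constructor
  · rintro ⟨ks, hlen, hpos, rfl⟩
    rw [List.length_replicate] at hlen
    refine ⟨ks.sum, hlen ▸ mySum_ge_length ks hpos, ?_⟩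
    rw [show List.replicate n c = List.replicate ks.length c by rw [hlen]]
    rw [List.flatMap, myZip_replicate, List.map_map]
    simpa [Function.comp_def] using myFlatten_rep c ks
  · rintro ⟨m, hm, rfl⟩
    set ks : List ℕ := List.replicate (n-1) 1 ++ [m - (n-1)] with hks
    have hlen : ks.length = n := by simp [hks]; omega
    refine ⟨ks, ?_, ?_, ?_⟩
    · simp [hlen]
    · intro k hk
      rcases List.mem_append.mp hk with hk | hk
      · simp at hk; omega
      · simp at hk; omega
    · rw [show List.replicate n c = List.replicate ks.length c by rw [hlen]]
      rw [List.flatMap, myZip_replicate, List.map_map]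
      symm
      calc ((ks.map fun k => List.replicate k c)).flatten
          = List.replicate ks.sum c := myFlatten_rep _ _
        _ = List.replicate m c := by
            congr 1
            simp [hks, List.sum_replicate]
            omega

theorem myExp_append {u v w : List α} :
    IsExpansion (u ++ v) w ↔ ∃ w1 w2, w = w1 ++ w2 ∧ IsExpansion u w1 ∧ IsExpansion v w2 := by
  constructor
  · rintro ⟨ks, hlen, hpos, rfl⟩
    rw [List.length_append] at hlen
    have hsplit : (u ++ v).zip ks = u.zip (ks.take u.length) ++ v.zip (ks.drop u.length) := by
      conv_lhs => rw [← List.take_append_drop u.length ks]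
      exact List.zip_append (by simp [List.length_take]; omega)
    refine ⟨(u.zip (ks.take u.length)).flatMap fun p => List.replicate p.2 p.1,
            (v.zip (ks.drop u.length)).flatMap fun p => List.replicate p.2 p.1,
            by rw [hsplit, List.flatMap_append], ?_, ?_⟩
    · exact ⟨ks.take u.length, by simp [List.length_take]; omega,
        fun k hk => hpos k (List.mem_of_mem_take hk), rfl⟩
    · exact ⟨ks.drop u.length, by simp [List.length_drop]; omega,
        fun k hk => hpos k (List.mem_of_mem_drop hk), rfl⟩
  · rintro ⟨w1, w2, rfl, ⟨ks1, h1, p1, rfl⟩, ⟨ks2, h2, p2, rfl⟩⟩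
    exact ⟨ks1 ++ ks2, by simp [h1, h2],
      fun k hk => (List.mem_append.mp hk).elim (p1 k) (p2 k),
      by rw [List.zip_append h1.symm, List.flatMap_append]⟩

theorem myExp_getLast? {u w : List α} (h : IsExpansion u w) {e : α} (he : u.getLast? = some e) :
    w.getLast? = some e := by
  obtain ⟨u', rfl⟩ := List.getLast?_eq_some_iff.mp he
  obtain ⟨w1, w2, rfl, h1, h2⟩ := myExp_append.mp h
  obtain ⟨m, hm, rfl⟩ := (myExp_replicate le_rfl).mp (show IsExpansion (List.replicate 1 e) w2 by simpa using h2)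
  rw [List.getLast?_append, myGetLast?_replicate hm]
  rfl

theorem myCorrCost_append (d : α → α → ℝ) {x1 y1 : List α} (h : x1.length = y1.length)
    (x2 y2 : List α) :
    corrCost d (x1 ++ x2) (y1 ++ y2) = corrCost d x1 y1 + corrCost d x2 y2 := by
  unfold corrCost
  rw [List.zip_append h, List.map_append, List.sum_append]

theorem myCorrCost_replicate (d : α → α → ℝ) (a b : α) (n : ℕ) :
    corrCost d (List.replicate n a) (List.replicate n b) = n * d a b := by
  induction n with
  | zero => simp [corrCost]
  | succ m ih =>
    unfold corrCost at ih ⊢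
    simp only [List.replicate_succ, List.zip_cons_cons, List.map_cons, List.sum_cons, ih]
    push_cast
    ring

theorem mySInf_le_sInf_add (S T : Set EReal) (r : ℝ) (h : ∀ t ∈ T, t + (r : EReal) ∈ S) :
    sInf S ≤ sInf T + (r : EReal) := by
  rw [← EReal.sub_le_iff_le_add (Or.inl (by simp)) (Or.inl (by simp))]
  refine le_sInf fun t ht => ?_
  rw [EReal.sub_le_iff_le_add (Or.inl (by simp)) (Or.inl (by simp))]
  exact sInf_le (h t ht)

end Part3

end MyHelpers

/-- The recurrence for `SP(x, y, rx, ry, oy)` in the case `l_x ≤ o_y`. -/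


theorem stmt15 [MetricSpace α] [DecidableEq α] [Inhabited α] (x y : List α)
    (rx ry oy : ℕ) (hrx : 1 ≤ rx) (hrx' : rx ≤ numRuns x)
    (hry : 1 ≤ ry) (hry' : ry ≤ numRuns y)
    (hoy : 1 ≤ oy) (hoy' : oy ≤ runLen y (ry - 1))
    (hcase : runLen x (rx - 1) ≤ oy) :
    SP dist x y rx ry oy =
      min (SP dist x y rx ry (oy - 1) +
            ((dist (runLetter x (rx - 1)) (runLetter y (ry - 1)) : ℝ) : EReal))
          (SP dist x y (rx - 1) ry (oy - runLen x (rx - 1)) +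
            ((dist (runLetter x (rx - 1)) (runLetter y (ry - 1)) *
              (runLen x (rx - 1) : ℝ) : ℝ) : EReal)) := by
  set a := runLetter x (rx - 1) with ha
  set b := runLetter y (ry - 1) with hb
  set lx := runLen x (rx - 1) with hlx
  have hrxn : rx - 1 < numRuns x := by omega
  have hryn : ry - 1 < numRuns y := by omega
  have hlx1 : 1 ≤ lx := myRunLen_pos hrxn
  have hX : firstRuns rx x = firstRuns (rx - 1) x ++ List.replicate lx a := by
    have h := myFirstRuns_succ (x := x) (k := rx - 1) hrxn
    rw [show rx - 1 + 1 = rx from by omega] at h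
    rw [h, ← ha, ← hlx]
  have hP : ∀ o, o ≤ runLen y (ry - 1) →
      runPrefix ry o y = firstRuns (ry - 1) y ++ List.replicate o b := by
    intro o ho
    unfold runPrefix
    congr 1
    have hmem : (runsOf y).getD (ry - 1) [] ∈ runsOf y := by
      rw [List.getD_eq_getElem _ _ (show ry - 1 < (runsOf y).length from hryn)]
      exact List.getElem_mem _
    have hconst := (myRunsOf_mem hmem).2
    conv_lhs => rw [hconst]
    rw [List.take_replicate]
    have hbb : ((runsOf y).getD (ry - 1) []).headI = b := by rw [hb]; rfl
    rw [hbb]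
    congr 1
    have : ((runsOf y).getD (ry - 1) []).length = runLen y (ry - 1) := rfl
    omega
  have hPlast : ∀ e ∈ (firstRuns (ry - 1) y).getLast?, e ≠ b := by
    intro e he
    rcases Nat.lt_or_ge ry 2 with h1 | h1
    · exfalso
      have : ry - 1 = 0 := by omega
      rw [this] at he
      simp [firstRuns] at he
    · have hg := myFirstRuns_getLast? (y := y) (k := ry - 1) (by omega) (by omega)
      rw [hg] at he
      have he' : e = runLetter y (ry - 1 - 1) := by simpa using he.symm
      subst he'
      have hne := myRunLetter_ne (y := y) (k := ry - 2)
        (by rw [show ry - 2 + 1 = ry - 1 from by omega]; exact hryn)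
      rw [show ry - 2 + 1 = ry - 1 from by omega] at hne
      rw [show ry - 1 - 1 = ry - 2 from by omega]
      exact hne
  have hExpLast : ∀ v, IsExpansion (firstRuns (ry - 1) y) v → ∀ e ∈ v.getLast?, e ≠ b := by
    intro v hv e he
    cases hQ : (firstRuns (ry - 1) y).getLast? with
    | none =>
      have h0 : firstRuns (ry - 1) y = [] := by rwa [List.getLast?_eq_none_iff] at hQ
      rw [h0, myExp_nil] at hv
      subst hv
      simp at he
    | some e' =>
      have h0 := myExp_getLast? hv hQ
      rw [h0] at he
      have hee : e = e' := by simpa using he.symm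
      subst hee
      exact hPlast e (by rw [hQ]; rfl)
  have hExpRep : ∀ (o : ℕ) (cc : α), IsExpansion (List.replicate o cc) (List.replicate o cc) := by
    intro o cc
    rcases Nat.eq_zero_or_pos o with rfl | h
    · exact ⟨[], by simp, by simp, by simp⟩
    · exact (myExp_replicate h).mpr ⟨o, le_rfl, rfl⟩
  have hXdecomp : ∀ w, IsExpansion (firstRuns rx x) w →
      ∃ u m, lx ≤ m ∧ IsExpansion (firstRuns (rx - 1) x) u ∧ w = u ++ List.replicate m a := by
    intro w hwp
    rw [hX] at hwp
    obtain ⟨u, w2, rfl, hu, h2⟩ := myExp_append.mp hwp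
    obtain ⟨m, hm, rfl⟩ := (myExp_replicate hlx1).mp h2
    exact ⟨u, m, hm, hu, rfl⟩
  have hYdecomp : ∀ o, 0 < o → o ≤ runLen y (ry - 1) → ∀ w,
      IsExpansion (runPrefix ry o y) w → lastRunLen w = o →
      ∃ v, IsExpansion (firstRuns (ry - 1) y) v ∧ w = v ++ List.replicate o b ∧
        w.length = v.length + o := by
    intro o hpos ho w hw hwl
    rw [hP o ho] at hw
    obtain ⟨v, w2, rfl, hv, h2⟩ := myExp_append.mp hw
    obtain ⟨m, hm, rfl⟩ := (myExp_replicate hpos).mp h2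
    have hmo : m = o := by
      rw [myLastRunLen_append_replicate (by omega) (hExpLast v hv)] at hwl
      omega
    subst hmo
    exact ⟨v, hv, rfl, by simp⟩
  have hYcomp : ∀ o j w, o + j ≤ runLen y (ry - 1) → 1 ≤ j →
      IsExpansion (runPrefix ry o y) w → (0 < o → lastRunLen w = o) →
      IsExpansion (runPrefix ry (o + j) y) (w ++ List.replicate j b) ∧
      lastRunLen (w ++ List.replicate j b) = o + j := by
    intro o j w hoj hj hw hwlast
    rcases Nat.eq_zero_or_pos o with rfl | hpos
    · simp only [Nat.zero_add] at *
      rw [hP 0 (by omega)] at hw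
      simp only [List.replicate_zero, List.append_nil] at hw
      constructor
      · rw [hP j hoj]
        exact myExp_append.mpr ⟨w, _, rfl, hw, hExpRep j _⟩
      · exact myLastRunLen_append_replicate hj (hExpLast w hw)
    · obtain ⟨v, hv, rfl, _⟩ := hYdecomp o hpos (by omega) w hw (hwlast hpos)
      rw [List.append_assoc, ← List.replicate_add]
      constructor
      · rw [hP (o + j) hoj]
        exact myExp_append.mpr ⟨v, _, rfl, hv, hExpRep (o + j) _⟩
      · exact myLastRunLen_append_replicate (by omega) (hExpLast v hv)
  apply _root_.le_antisymm
  · apply le_min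
    · -- SP oy ≤ SP (oy - 1) + d
      unfold SP
      apply mySInf_le_sInf_add
      rintro t ⟨⟨xb', yb'⟩, ⟨hcorr, hlast⟩, rfl⟩
      obtain ⟨hex, hey, hlen⟩ := hcorr
      dsimp only at hex hey hlen hlast
      obtain ⟨u, m, hm, hu, rfl⟩ := hXdecomp xb' hex
      have hyc := hYcomp (oy - 1) 1 yb' (by omega) le_rfl hey hlast
      rw [show oy - 1 + 1 = oy from by omega] at hyc
      refine ⟨((u ++ List.replicate m a) ++ List.replicate 1 a, yb' ++ List.replicate 1 b),
        ⟨⟨?_, hyc.1, ?_⟩, fun _ => hyc.2⟩, ?_⟩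
      · rw [hX, List.append_assoc, ← List.replicate_add]
        exact myExp_append.mpr ⟨u, _, rfl, hu, (myExp_replicate hlx1).mpr ⟨m + 1, by omega, rfl⟩⟩
      · simp only [List.length_append, List.length_replicate] at hlen ⊢
        omega
      · show ((corrCost dist ((u ++ List.replicate m a) ++ List.replicate 1 a)
            (yb' ++ List.replicate 1 b) : ℝ) : EReal) = _
        rw [myCorrCost_append dist hlen, myCorrCost_replicate, Nat.cast_one, one_mul,
          EReal.coe_add]
    · -- SP oy ≤ SP (rx-1) (oy - lx) + d * lx
      unfold SP
      apply mySInf_le_sInf_add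
      rintro t ⟨⟨xb', yb'⟩, ⟨hcorr, hlast⟩, rfl⟩
      obtain ⟨hex, hey, hlen⟩ := hcorr
      dsimp only at hex hey hlen hlast
      have hyc := hYcomp (oy - lx) lx yb' (by omega) hlx1 hey hlast
      rw [show oy - lx + lx = oy from by omega] at hyc
      refine ⟨(xb' ++ List.replicate lx a, yb' ++ List.replicate lx b),
        ⟨⟨?_, hyc.1, ?_⟩, fun _ => hyc.2⟩, ?_⟩
      · rw [hX]
        exact myExp_append.mpr ⟨xb', _, rfl, hex, hExpRep lx a⟩
      · simp only [List.length_append, List.length_replicate] at hlen ⊢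
        omega
      · show ((corrCost dist (xb' ++ List.replicate lx a) (yb' ++ List.replicate lx b) : ℝ) : EReal) = _
        rw [myCorrCost_append dist hlen, myCorrCost_replicate, mul_comm ((lx : ℝ)) (dist a b),
          EReal.coe_add]
  · apply le_sInf
    rintro t ⟨⟨xb, yb⟩, ⟨hcorr, hlast⟩, rfl⟩
    obtain ⟨hex, hey, hlen⟩ := hcorr
    dsimp only at hex hey hlen hlast
    obtain ⟨u, m, hm, hu, rfl⟩ := hXdecomp xb hex
    obtain ⟨v, hv, hybeq, hvlen⟩ := hYdecomp oy hoy hoy' yb hey (hlast hoy)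
    subst hybeq
    have hlen' : u.length + m = v.length + oy := by
      simp only [List.length_append, List.length_replicate] at hlen
      omega
    rcases eq_or_lt_of_le hm with rfl | hmlt
    · -- m = lx : take the B branch
      refine le_trans (min_le_right _ _) ?_
      have hsub : SP dist x y (rx - 1) ry (oy - lx) ≤
          ((corrCost dist u (v ++ List.replicate (oy - lx) b) : ℝ) : EReal) := by
        unfold SP
        apply sInf_le
        refine ⟨(u, v ++ List.replicate (oy - lx) b), ⟨⟨hu, ?_, ?_⟩, ?_⟩, rfl⟩
        · rw [hP (oy - lx) (by omega)]
          exact myExp_append.mpr ⟨v, _, rfl, hv, hExpRep _ _⟩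
        · simp only [List.length_append, List.length_replicate]
          omega
        · intro hpos
          exact myLastRunLen_append_replicate (by omega) (hExpLast v hv)
      have hcost : corrCost dist (u ++ List.replicate lx a) (v ++ List.replicate oy b)
          = corrCost dist u (v ++ List.replicate (oy - lx) b) + dist a b * lx := by
        have h1 : v ++ List.replicate oy b
            = (v ++ List.replicate (oy - lx) b) ++ List.replicate lx b := by
          rw [List.append_assoc, ← List.replicate_add]
          congr 2
          omega
        rw [h1, myCorrCost_append dist
          (by simp only [List.length_append, List.length_replicate]; omega),
          myCorrCost_replicate, mul_comm]
      calc SP dist x y (rx - 1) ry (oy - lx) + ((dist a b * (lx : ℝ) : ℝ) : EReal)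
          ≤ ((corrCost dist u (v ++ List.replicate (oy - lx) b) : ℝ) : EReal)
            + ((dist a b * (lx : ℝ) : ℝ) : EReal) := add_le_add_left hsub _
        _ = _ := by rw [← EReal.coe_add, ← hcost]
    · -- lx < m : take the A branch
      refine le_trans (min_le_left _ _) ?_
      have hsub : SP dist x y rx ry (oy - 1) ≤
          ((corrCost dist (u ++ List.replicate (m - 1) a)
            (v ++ List.replicate (oy - 1) b) : ℝ) : EReal) := by
        unfold SP
        apply sInf_le
        refine ⟨(u ++ List.replicate (m - 1) a, v ++ List.replicate (oy - 1) b),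
          ⟨⟨?_, ?_, ?_⟩, ?_⟩, rfl⟩
        · rw [hX]
          exact myExp_append.mpr ⟨u, _, rfl, hu,
            (myExp_replicate hlx1).mpr ⟨m - 1, by omega, rfl⟩⟩
        · rw [hP (oy - 1) (by omega)]
          exact myExp_append.mpr ⟨v, _, rfl, hv, hExpRep _ _⟩
        · simp only [List.length_append, List.length_replicate]
          omega
        · intro hpos
          exact myLastRunLen_append_replicate (by omega) (hExpLast v hv)
      have hcost : corrCost dist (u ++ List.replicate m a) (v ++ List.replicate oy b)
          = corrCost dist (u ++ List.replicate (m - 1) a) (v ++ List.replicate (oy - 1) b)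
            + dist a b := by
        have h1 : u ++ List.replicate m a
            = (u ++ List.replicate (m - 1) a) ++ List.replicate 1 a := by
          rw [List.append_assoc, ← List.replicate_add]
          congr 2
          omega
        have h2 : v ++ List.replicate oy b
            = (v ++ List.replicate (oy - 1) b) ++ List.replicate 1 b := by
          rw [List.append_assoc, ← List.replicate_add]
          congr 2
          omega
        rw [h1, h2, myCorrCost_append dist
          (by simp only [List.length_append, List.length_replicate]; omega),
          myCorrCost_replicate, Nat.cast_one, one_mul]
      calc SP dist x y rx ry (oy - 1) + ((dist a b : ℝ) : EReal)
          ≤ ((corrCost dist (u ++ List.replicate (m - 1) a)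
              (v ++ List.replicate (oy - 1) b) : ℝ) : EReal)
            + ((dist a b : ℝ) : EReal) := add_le_add_left hsub _
        _ = _ := by rw [← EReal.coe_add, ← hcost]
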